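/- Let [a; b] be a 2×n semi-standard tableau over ℤ₊ⁿ with a ≠ b, with k the first index where a_k < b_k, such that a_j ≥ b_j for all j > k. Then for any semi-standard tableau [p; q] with the same column supports, p ≥_σ a and ([p;q] = [a;b] or [p;q] >_σ [a;b]). -/
import Mathlib


open Finset

/-- `a >_σ b`: the first index where `a` and `b` differ has `a k < b k`. -/
def sigmaGT {n : ℕ} (a b : Fin n → ℕ+) : Prop :=
  ∃ k : Fin n, (∀ i : Fin n, i < k → a i = b i) ∧ a k < b k

/-- `a ≥_σ b`. -/
def sigmaGE {n : ℕ} (a b : Fin n → ℕ+) : Prop :=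
  a = b ∨ sigmaGT a b

/-- A `p × n` tableau (rows in `ℤ₊ⁿ`) is semi-standard if its rows weakly decrease under `σ`. -/
def SemiStandard {p n : ℕ} (A : Fin p → Fin n → ℕ+) : Prop :=
  ∀ i j : Fin p, i ≤ j → sigmaGE (A i) (A j)

/-- `suppEq A B`: every column of `A` equals the corresponding column of `B` as a multiset. -/
def suppEq {p n : ℕ} (A B : Fin p → Fin n → ℕ+) : Prop :=
  ∀ j : Fin n, Multiset.map (fun i => A i j) Finset.univ.val
    = Multiset.map (fun i => B i j) Finset.univ.val

/-- Row-wise lexicographic comparison of tableaux under `σ`: `A >_σ B`. -/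
def tabGT {p n : ℕ} (A B : Fin p → Fin n → ℕ+) : Prop :=
  ∃ k : Fin p, (∀ i : Fin p, i < k → A i = B i) ∧ sigmaGT (A k) (B k)

/-- A semi-standard tableau is standard if it is `σ`-minimal among all semi-standard
tableaux with the same column supports. -/
def IsStandard {p n : ℕ} (A : Fin p → Fin n → ℕ+) : Prop :=
  SemiStandard A ∧ ∀ B : Fin p → Fin n → ℕ+,
    SemiStandard B → suppEq B A → B ≠ A → tabGT B A

/-- An `n`-dimensional Ferrers diagram: a nonempty finite down-closed subset of `ℤ₊ⁿ`. -/
def IsFerrers {n : ℕ} (D : Set (Fin n → ℕ+)) : Prop :=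
  D.Nonempty ∧ D.Finite ∧ ∀ b ∈ D, ∀ a : Fin n → ℕ+, (∀ i, a i ≤ b i) → a ∈ D

/-- `D` is standardizable. -/
def Standardizable {n : ℕ} (D : Set (Fin n → ℕ+)) : Prop :=
  ∀ a ∈ D, ∀ b ∈ D, a ≠ b → ∀ k : Fin n,
    (∀ i : Fin n, i < k → a i = b i) → a k < b k →
    (fun i => if i ≤ k then a i else max (a i) (b i)) ∈ D

/-- degree of the variable `x_{i,j}` in the monomial `∏_ℓ x_{a ℓ}`. -/
def degOf {w n : ℕ} (a : Fin w → Fin n → ℕ+) (i : Fin n) (j : ℕ) : ℕ :=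
  (Finset.univ.filter fun ℓ => ((a ℓ i : ℕ) = j)).card

lemma pairEq {α : Type*} {x y z w : α} (h : ({x, y} : Multiset α) = {z, w}) :
    (x = z ∧ y = w) ∨ (x = w ∧ y = z) := by
  simp only [Multiset.insert_eq_cons, Multiset.cons_eq_cons] at h
  rcases h with ⟨h1, h2⟩ | ⟨h1, cs, h2, h3⟩
  · exact Or.inl ⟨h1, Multiset.singleton_inj.mp h2⟩
  · rw [Multiset.singleton_eq_cons_iff] at h2 h3
    exact Or.inr ⟨h3.1.symm, h2.1⟩


theorem stmt18 {n : ℕ} (a b : Fin n → ℕ+) (hss : SemiStandard ![a, b]) (hne : a ≠ b)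
    (k : Fin n) (hmin : ∀ i : Fin n, i < k → a i = b i) (hk : a k < b k)
    (hge : ∀ j : Fin n, k < j → b j ≤ a j) :
    ∀ pp qq : Fin n → ℕ+, SemiStandard ![pp, qq] → suppEq ![pp, qq] ![a, b] →
      sigmaGE pp a ∧ (![pp, qq] = ![a, b] ∨ tabGT ![pp, qq] ![a, b]) := by
  intro pp qq hssB hsupp
  have hcol : ∀ j, (pp j = a j ∧ qq j = b j) ∨ (pp j = b j ∧ qq j = a j) := by
    intro j
    have h := hsupp j
    have huniv : (Finset.univ.val : Multiset (Fin 2)) = {0, 1} := by decide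
    rw [huniv] at h
    simp only [Multiset.insert_eq_cons, Multiset.map_cons, Multiset.map_singleton,
      Matrix.cons_val_zero, Matrix.cons_val_one, Matrix.head_cons] at h
    exact pairEq h
  by_cases hpa : pp = a
  · subst hpa
    refine ⟨Or.inl rfl, Or.inl ?_⟩
    have hqb : qq = b := by
      funext j
      rcases hcol j with ⟨_, h2⟩ | ⟨h1, h2⟩
      · exact h2
      · exact h2.trans h1
    rw [hqb]
  · -- pp ≠ a
    set S := Finset.univ.filter (fun i => pp i ≠ a i) with hSdef
    have hS : S.Nonempty := by
      obtain ⟨i, hi⟩ := Function.ne_iff.mp hpa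
      exact ⟨i, by simp [hSdef, hi]⟩
    set m := S.min' hS with hmdef
    have hmS : pp m ≠ a m := by
      have := S.min'_mem hS
      simpa [hSdef] using this
    have hbelow : ∀ i, i < m → pp i = a i := by
      intro i hi
      by_contra hcon
      exact absurd (S.min'_le i (by simp [hSdef, hcon])) (not_le.mpr hi)
    obtain ⟨hpm, hqm⟩ : pp m = b m ∧ qq m = a m := by
      rcases hcol m with ⟨h1, _⟩ | h
      · exact absurd h1 hmS
      · exact h
    have habm : a m ≠ b m := fun h => hmS (by rw [hpm, h])
    rcases lt_trichotomy m k with hmk | hmk | hmk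
    · exact absurd (hmin m hmk) habm
    · -- m = k : contradiction with semistandardness of ![pp, qq]
      exfalso
      subst hmk
      have hge' := hssB 0 1 (by decide)
      simp only [Matrix.cons_val_zero, Matrix.cons_val_one, Matrix.head_cons] at hge'
      have hpq : pp ≠ qq := by
        intro h
        have := congrFun h m
        rw [hpm, hqm] at this
        exact habm this.symm
      rcases hge' with h | ⟨k', h1, h2⟩
      · exact hpq h
      · rcases lt_trichotomy k' m with h3 | h3 | h3
        · have := hbelow k' h3
          have hq := (hmin k' h3)
          rcases hcol k' with ⟨ha1, ha2⟩ | ⟨ha1, ha2⟩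
          · rw [ha1, ha2, ← hq] at h2; exact lt_irrefl _ h2
          · rw [ha1, ha2, hq] at h2; exact lt_irrefl _ h2
        · subst h3
          rw [hpm, hqm] at h2
          exact absurd hk (not_lt.mpr h2.le)
        · have := h1 m h3
          rw [hpm, hqm] at this
          exact habm this.symm
    · -- m > k : sigmaGT pp a
      have hlt : pp m < a m :=
        lt_of_le_of_ne (le_of_eq_of_le hpm (hge m hmk)) hmS
      have hGT : sigmaGT pp a := ⟨m, hbelow, hlt⟩
      refine ⟨Or.inr hGT, Or.inr ⟨0, ?_, ?_⟩⟩
      · intro i hi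
        exact absurd hi (by simp [Fin.lt_def])
      · simpa using hGT
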